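/- If C is a reduced commutative ring and ω is alternating (ω(x, x) = 0 for all x), then every ring homomorphism F : R ×_ω M → C vanishes on {0} × M, and hence factors uniquely through the quotient map R ×_ω M → R/I, where I is the ideal of R generated by the image of ω. -/

import Mathlib

/-- The multiplication `(a, x) · (b, y) = (a b + ω(x, y), a • y + b • x)` on `R × M`. -/
def superMul {R M : Type*} [CommRing R] [AddCommGroup M] [Module R M]
    (ω : M →ₗ[R] M →ₗ[R] R) (p q : R × M) : R × M :=
  (p.1 * q.1 + ω p.2 q.2, p.1 • q.2 + q.1 • p.2)

theorem stmt7 {R M C : Type*} [CommRing R] [AddCommGroup M] [Module R M]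
    [CommRing C] [IsReduced C]
    (ω : M →ₗ[R] M →ₗ[R] R)
    (halt : ∀ x : M, ω x x = 0)
    (hassoc : ∀ x y z : M, ω x y • z = ω y z • x)
    (F : R × M → C)
    (hF1 : F (1, 0) = 1)
    (hFadd : ∀ p q : R × M, F (p + q) = F p + F q)
    (hFmul : ∀ p q : R × M, F (superMul ω p q) = F p * F q) :
    let I : Ideal R := Ideal.span (Set.range fun xy : M × M => ω xy.1 xy.2)
    (∀ x : M, F (0, x) = 0) ∧
    (∃! g : R ⧸ I →+* C, ∀ p : R × M, g (Ideal.Quotient.mk I p.1) = F p) := by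
  intro I
  have hF0 : F (0, 0) = 0 := by
    have h := hFadd (0, 0) (0, 0)
    simp only [Prod.mk_add_mk, add_zero] at h
    exact left_eq_add.mp h
  have hx0 : ∀ x : M, F (0, x) = 0 := by
    intro x
    have h : F (0, x) * F (0, x) = 0 := by
      rw [← hFmul]
      have : superMul ω ((0 : R), x) (0, x) = (0, 0) := by
        simp [superMul, halt x]
      rw [this, hF0]
    have hn : IsNilpotent (F (0, x)) := ⟨2, by rw [pow_two]; exact h⟩
    exact hn.eq_zero
  refine ⟨hx0, ?_⟩
  have hmul : ∀ a b : R, F (a * b, 0) = F (a, 0) * F (b, 0) := by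
    intro a b
    have : superMul ω ((a : R), (0 : M)) (b, 0) = (a * b, 0) := by
      simp [superMul]
    rw [← this, hFmul]
  have hadd : ∀ a b : R, F (a + b, 0) = F (a, 0) + F (b, 0) := by
    intro a b
    have := hFadd (a, 0) (b, 0)
    simpa using this
  let f : R →+* C :=
    { toFun := fun a => F (a, 0)
      map_one' := hF1
      map_mul' := hmul
      map_zero' := hF0
      map_add' := hadd }
  have hFp : ∀ p : R × M, F p = f p.1 := by
    intro ⟨a, x⟩
    have := hFadd (a, 0) (0, x)
    simp only [Prod.mk_add_mk, add_zero, zero_add] at this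
    simp [this, hx0, f]
  have hker : I ≤ RingHom.ker f := by
    rw [Ideal.span_le]
    rintro r ⟨⟨x, y⟩, rfl⟩
    have : superMul ω ((0 : R), x) (0, y) = (ω x y, 0) := by
      simp [superMul]
    have h := hFmul (0, x) (0, y)
    rw [this, hx0, hx0, mul_zero] at h
    exact h
  refine ⟨Ideal.Quotient.lift I f (fun a ha => RingHom.mem_ker.mp (hker ha)), ?_, ?_⟩
  · intro p
    rw [Ideal.Quotient.lift_mk, hFp p]
  · intro g hg
    ext a
    have := hg (a, 0)
    simp only [RingHom.comp_apply]
    rw [this, Ideal.Quotient.lift_mk]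
    rfl
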